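/- Under the SISO discrete-time adaptive law setup with |k_p| · xᵀ Γ x < 2 xᵀ x for all nonzero x ∈ ℝ^N, the normalized estimation error is square-summable and uniformly bounded: ∑_{t=0}^{∞} ε(t)²/m(t)² < ∞ and sup_{t ∈ ℕ} |ε(t)|/m(t) < ∞ (i.e. ε/m ∈ L² ∩ L^∞). -/

import Mathlib

open Matrix BigOperators

-- bilinear expansion helper
lemma expand_quad {N : ℕ} (Γ : Matrix (Fin N) (Fin N) ℝ)
    (hsym : Γᵀ = Γ) (hdet : IsUnit Γ.det)
    (u z : Fin N → ℝ) (d : ℝ) :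
    (u - d • (Γ *ᵥ z)) ⬝ᵥ (Γ⁻¹ *ᵥ (u - d • (Γ *ᵥ z))) =
      u ⬝ᵥ (Γ⁻¹ *ᵥ u) - 2 * d * (u ⬝ᵥ z) + d ^ 2 * (z ⬝ᵥ (Γ *ᵥ z)) := by
  have hT : (Γ⁻¹)ᵀ = Γ⁻¹ := by
    rw [Matrix.transpose_nonsing_inv, hsym]
  have hinv : Γ⁻¹ *ᵥ (Γ *ᵥ z) = z := by
    rw [Matrix.mulVec_mulVec, Matrix.nonsing_inv_mul _ hdet, Matrix.one_mulVec]
  have hsw : (Γ *ᵥ z) ⬝ᵥ (Γ⁻¹ *ᵥ u) = z ⬝ᵥ u := by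
    rw [Matrix.dotProduct_mulVec, ← Matrix.mulVec_transpose, hT, hinv]
  have hsw2 : (Γ *ᵥ z) ⬝ᵥ (Γ⁻¹ *ᵥ (Γ *ᵥ z)) = z ⬝ᵥ (Γ *ᵥ z) := by
    rw [hinv, dotProduct_comm]
  have huz : u ⬝ᵥ (Γ⁻¹ *ᵥ (Γ *ᵥ z)) = u ⬝ᵥ z := by rw [hinv]
  simp only [Matrix.mulVec_sub, Matrix.mulVec_smul, sub_dotProduct,
    dotProduct_sub, smul_dotProduct, dotProduct_smul,
    smul_eq_mul, hsw, hsw2, huz]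
  rw [dotProduct_comm z u]
  ring

lemma quad_bound {N : ℕ} (hN : 0 < N) (Γ : Matrix (Fin N) (Fin N) ℝ) (k : ℝ) (hk : 0 < k)
    (hpos : ∀ x : Fin N → ℝ, x ≠ 0 → 0 < x ⬝ᵥ Γ *ᵥ x)
    (h2 : ∀ x : Fin N → ℝ, x ≠ 0 → k * (x ⬝ᵥ Γ *ᵥ x) < 2 * (x ⬝ᵥ x)) :
    ∃ c : ℝ, 0 < c ∧ c < 2 ∧ ∀ x : Fin N → ℝ, k * (x ⬝ᵥ Γ *ᵥ x) ≤ c * (x ⬝ᵥ x) := by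
  classical
  set E := EuclideanSpace ℝ (Fin N)
  have hc1 : ∀ i : Fin N, Continuous fun x : E => x i := fun i => (EuclideanSpace.proj i).continuous
  set f : E → ℝ := fun x => k * ∑ i, x i * ∑ j, Γ i j * x j with hf
  have hfeq : ∀ x : E, f x = k * ((fun i => x i) ⬝ᵥ Γ *ᵥ (fun i => x i)) := by
    intro x; simp [hf, dotProduct, Matrix.mulVec]
  have hcont : Continuous f :=
    continuous_const.mul (continuous_finset_sum _ fun i _ =>
      (hc1 i).mul (continuous_finset_sum _ fun j _ => continuous_const.mul (hc1 j)))
  -- nonempty sphere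
  have hx0 : (EuclideanSpace.single (⟨0, hN⟩ : Fin N) (1:ℝ) : E) ∈ Metric.sphere (0:E) 1 := by
    simp [mem_sphere_iff_norm, EuclideanSpace.norm_single]
  obtain ⟨z, hzS, hzmax⟩ := (isCompact_sphere (0:E) 1).exists_isMaxOn ⟨_, hx0⟩ hcont.continuousOn
  have hznorm : ‖z‖ = 1 := by simpa [mem_sphere_iff_norm] using hzS
  have hz0 : (fun i => z i) ≠ (0 : Fin N → ℝ) := by
    intro h
    have : z = 0 := by
      ext i; exact congrFun h i
    rw [this] at hznorm; simp at hznorm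
  have hzdot : (fun i => z i) ⬝ᵥ (fun i => z i) = 1 := by
    have h1 : ‖z‖ ^ 2 = ∑ i, ‖z i‖ ^ 2 := by
      rw [EuclideanSpace.norm_eq, Real.sq_sqrt]; positivity
    rw [hznorm] at h1
    simp only [Real.norm_eq_abs, sq_abs, one_pow] at h1
    simp only [dotProduct, ← pow_two]
    exact h1.symm
  refine ⟨f z, ?_, ?_, ?_⟩
  · rw [hfeq]; exact mul_pos hk (hpos _ hz0)
  · have := h2 _ hz0
    rw [hzdot] at this
    rw [hfeq]; linarith
  · intro x
    by_cases hx : x = (0 : Fin N → ℝ)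
    · subst hx
      simp [Matrix.mulVec_zero, dotProduct_zero, zero_dotProduct]
    · set X : E := (WithLp.equiv 2 (Fin N → ℝ)).symm x with hX
      have hXa : ∀ i, X i = x i := fun i => rfl
      have hX0 : X ≠ 0 := by
        intro h; apply hx; ext i; rw [← hXa i, h]; rfl
      have hr : (0:ℝ) < ‖X‖ := norm_pos_iff.mpr hX0
      set y : E := ‖X‖⁻¹ • X with hy
      have hyS : y ∈ Metric.sphere (0:E) 1 := by
        simp [hy, mem_sphere_iff_norm, norm_smul, abs_of_pos (inv_pos.mpr hr),
          inv_mul_cancel₀ hr.ne']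
      have hya : ∀ i, y i = ‖X‖⁻¹ * x i := by
        intro i
        show ‖X‖⁻¹ * X i = ‖X‖⁻¹ * x i
        rw [hXa]
      have hfy : f y ≤ f z := hzmax hyS
      have hXdot : x ⬝ᵥ x = ‖X‖ ^ 2 := by
        have h1 : ‖X‖ ^ 2 = ∑ i, ‖X i‖ ^ 2 := by
          rw [EuclideanSpace.norm_eq, Real.sq_sqrt]; positivity
        simp only [Real.norm_eq_abs, sq_abs, hXa] at h1
        simp only [dotProduct, ← pow_two]
        exact h1.symm
      have hscale : ((fun i => y i) ⬝ᵥ Γ *ᵥ (fun i => y i)) = ‖X‖⁻¹ ^ 2 * (x ⬝ᵥ Γ *ᵥ x) := by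
        have hyx : (fun i => y i) = ‖X‖⁻¹ • x := by
          ext i; rw [hya i]; rfl
        rw [hyx, smul_dotProduct, Matrix.mulVec_smul, dotProduct_smul,
          smul_eq_mul, smul_eq_mul]
        ring
      have hfyv : f y = ‖X‖⁻¹ ^ 2 * (k * (x ⬝ᵥ Γ *ᵥ x)) := by
        rw [hfeq, hscale]; ring
      have h3 : k * (x ⬝ᵥ Γ *ᵥ x) = ‖X‖ ^ 2 * f y := by
        rw [hfyv]; field_simp
      rw [h3, hXdot]
      nlinarith [sq_nonneg ‖X‖, hr]

set_option maxHeartbeats 1000000 in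
theorem siso_discrete_adaptive_law_estimation_error_L2_Linfty
    (N : ℕ) (hN : 0 < N)
    (ζ : ℕ → Fin N → ℝ) (ξ : ℕ → ℝ)
    (kp : ℝ) (hkp : kp ≠ 0)
    (θs : Fin N → ℝ)
    (Γ : Matrix (Fin N) (Fin N) ℝ) (hΓ : Γ.PosDef)
    (hΓ2 : ∀ x : Fin N → ℝ, x ≠ 0 →
      |kp| * (∑ i, x i * (Γ.mulVec x) i) < 2 * ∑ i, x i * x i)
    (γ : ℝ) (hγ1 : 0 < γ) (hγ2 : γ < 2)
    (θ : ℕ → Fin N → ℝ) (ρ : ℕ → ℝ)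
    (m ε : ℕ → ℝ)
    (hm : ∀ t, m t = Real.sqrt (1 + (∑ i, ζ t i * ζ t i) + ξ t ^ 2))
    (hε : ∀ t, ε t = kp * (∑ i, (θ t i - θs i) * ζ t i) + (ρ t - kp) * ξ t)
    (hθ : ∀ t, θ (t + 1) = θ t - (Real.sign kp * ε t / m t ^ 2) • Γ.mulVec (ζ t))
    (hρ : ∀ t, ρ (t + 1) = ρ t - γ * ξ t * ε t / m t ^ 2) :
    Summable (fun t => ε t ^ 2 / m t ^ 2) ∧ (∃ C : ℝ, ∀ t, |ε t| / m t ≤ C) := by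
  classical
  have hkpos : (0:ℝ) < |kp| := abs_pos.mpr hkp
  have hpos : ∀ x : Fin N → ℝ, x ≠ 0 → 0 < x ⬝ᵥ Γ *ᵥ x := by
    intro x hx; have := hΓ.dotProduct_mulVec_pos hx; simpa using this
  have hposQ : ∀ x : Fin N → ℝ, 0 ≤ x ⬝ᵥ Γ⁻¹ *ᵥ x := by
    intro x
    by_cases hx : x = 0
    · simp [hx]
    · have := (hΓ.inv).dotProduct_mulVec_pos hx; have h := this; simp at h; linarith [h]
  have hsym : Γᵀ = Γ := by
    have := hΓ.1
    simpa [Matrix.IsHermitian, Matrix.conjTranspose_eq_transpose_of_trivial] using this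
  have hdet : IsUnit Γ.det := isUnit_iff_ne_zero.mpr hΓ.det_pos.ne'
  obtain ⟨c, hc0, hc2, hcb⟩ := quad_bound hN Γ |kp| hkpos hpos (fun x hx => hΓ2 x hx)
  obtain ⟨cm, hcm⟩ : ∃ cm : ℝ, cm = max c γ := ⟨_, rfl⟩
  have hcm0 : 0 < cm := by rw [hcm]; exact lt_of_lt_of_le hc0 (le_max_left _ _)
  have hcm2 : cm < 2 := by rw [hcm]; exact max_lt hc2 hγ2
  -- basic positivity of m
  have hζnn : ∀ t, (0:ℝ) ≤ ζ t ⬝ᵥ ζ t := by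
    intro t; exact Finset.sum_nonneg fun i _ => mul_self_nonneg _
  have hmpos : ∀ t, 0 < m t := by
    intro t; rw [hm t]
    apply Real.sqrt_pos.mpr
    have := hζnn t
    simp only [dotProduct] at this
    nlinarith [sq_nonneg (ξ t)]
  have hm2 : ∀ t, m t ^ 2 = 1 + (ζ t ⬝ᵥ ζ t) + ξ t ^ 2 := by
    intro t; rw [hm t, Real.sq_sqrt]
    · rfl
    · have := hζnn t
      simp only [dotProduct] at this
      nlinarith [sq_nonneg (ξ t)]
  have hMpos : ∀ t, (0:ℝ) < m t ^ 2 := fun t => pow_pos (hmpos t) 2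
  -- sign facts
  have hsgn : Real.sign kp * |kp| = kp := by
    rcases hkp.lt_or_gt with h | h
    · rw [Real.sign_of_neg h, abs_of_neg h]; ring
    · rw [Real.sign_of_pos h, abs_of_pos h]; ring
  have hsgn2 : Real.sign kp ^ 2 = 1 := by
    rcases hkp.lt_or_gt with h | h
    · rw [Real.sign_of_neg h]; norm_num
    · rw [Real.sign_of_pos h]; norm_num
  -- Lyapunov function
  obtain ⟨V, hV⟩ : ∃ V : ℕ → ℝ, V = fun t =>
      |kp| * ((θ t - θs) ⬝ᵥ (Γ⁻¹ *ᵥ (θ t - θs))) + (ρ t - kp) ^ 2 / γ := ⟨_, rfl⟩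
  have hVnn : ∀ t, 0 ≤ V t := by
    intro t
    have h1 := hposQ (θ t - θs)
    have h2 : 0 ≤ (ρ t - kp) ^ 2 / γ := by positivity
    have := mul_nonneg hkpos.le h1
    simp only [hV]; linarith
  -- step inequality
  have hstep : ∀ t, V (t + 1) ≤ V t - (2 - cm) * (ε t ^ 2 / m t ^ 2) := by
    intro t
    set d : ℝ := Real.sign kp * ε t / m t ^ 2 with hd
    have hθt : θ (t + 1) - θs = (θ t - θs) - d • (Γ *ᵥ ζ t) := by
      rw [hθ t]; rw [sub_right_comm]
    have e1 : (θ (t+1) - θs) ⬝ᵥ (Γ⁻¹ *ᵥ (θ (t+1) - θs)) =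
        (θ t - θs) ⬝ᵥ (Γ⁻¹ *ᵥ (θ t - θs)) - 2 * d * ((θ t - θs) ⬝ᵥ ζ t)
          + d ^ 2 * (ζ t ⬝ᵥ (Γ *ᵥ ζ t)) := by
      rw [hθt]; exact expand_quad Γ hsym hdet _ _ _
    have hdot : kp * ((θ t - θs) ⬝ᵥ ζ t) = ε t - (ρ t - kp) * ξ t := by
      rw [hε t]; simp only [dotProduct, Pi.sub_apply]; ring
    have hd1 : |kp| * d = kp * ε t / m t ^ 2 := by
      have h : |kp| * d = (Real.sign kp * |kp|) * ε t / m t ^ 2 := by rw [hd]; ring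
      rw [h, hsgn]
    have hd2 : d ^ 2 = ε t ^ 2 / m t ^ 4 := by
      rw [hd, div_pow, mul_pow, hsgn2, one_mul]; ring_nf
    -- ρ part
    have e2 : (ρ (t+1) - kp) ^ 2 / γ =
        (ρ t - kp) ^ 2 / γ - 2 * (ρ t - kp) * ξ t * ε t / m t ^ 2
          + γ * ξ t ^ 2 * ε t ^ 2 / m t ^ 4 := by
      rw [hρ t]
      field_simp
      ring
    -- assemble equality
    set A := (θ t - θs) ⬝ᵥ (Γ⁻¹ *ᵥ (θ t - θs)) with hA
    set B := (θ t - θs) ⬝ᵥ ζ t with hB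
    set G := ζ t ⬝ᵥ (Γ *ᵥ ζ t) with hG
    have hexp : |kp| * (A - 2 * d * B + d ^ 2 * G) =
        |kp| * A - 2 * (kp * ε t / m t ^ 2) * B + (ε t ^ 2 / m t ^ 4) * (|kp| * G) := by
      linear_combination (-2 * B) * hd1 + (|kp| * G) * hd2
    have Veq : V (t + 1) = V t - 2 * (ε t ^ 2 / m t ^ 2)
        + (ε t ^ 2 / m t ^ 4) * (|kp| * G + γ * ξ t ^ 2) := by
      simp only [hV]
      rw [e1, e2, hexp]
      linear_combination (-2 * ε t / m t ^ 2) * hdot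
    have hbr : |kp| * G + γ * ξ t ^ 2 ≤ cm * m t ^ 2 := by
      have h1 : |kp| * G ≤ c * (ζ t ⬝ᵥ ζ t) := hcb (ζ t)
      have h1' : c * (ζ t ⬝ᵥ ζ t) ≤ cm * (ζ t ⬝ᵥ ζ t) :=
        mul_le_mul_of_nonneg_right (hcm ▸ le_max_left c γ) (hζnn t)
      have h2 : γ * ξ t ^ 2 ≤ cm * ξ t ^ 2 :=
        mul_le_mul_of_nonneg_right (hcm ▸ le_max_right c γ) (sq_nonneg _)
      rw [hm2 t]
      nlinarith [hcm0]
    have hnn : (0:ℝ) ≤ ε t ^ 2 / m t ^ 4 := by positivity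
    have hquot : (ε t ^ 2 / m t ^ 4) * (cm * m t ^ 2) = cm * (ε t ^ 2 / m t ^ 2) := by
      have hmne : m t ≠ 0 := (hmpos t).ne'
      field_simp
    have hle : (ε t ^ 2 / m t ^ 4) * (|kp| * G + γ * ξ t ^ 2) ≤ cm * (ε t ^ 2 / m t ^ 2) := by
      calc (ε t ^ 2 / m t ^ 4) * (|kp| * G + γ * ξ t ^ 2)
          ≤ (ε t ^ 2 / m t ^ 4) * (cm * m t ^ 2) := mul_le_mul_of_nonneg_left hbr hnn
        _ = cm * (ε t ^ 2 / m t ^ 2) := hquot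
    rw [Veq]
    linarith
  -- monotonicity of V
  have hVd : ∀ t, V (t + 1) ≤ V t := by
    intro t
    have h := hstep t
    have h2 : 0 ≤ (2 - cm) * (ε t ^ 2 / m t ^ 2) :=
      mul_nonneg (by linarith) (by positivity)
    linarith
  have hVle : ∀ t, V t ≤ V 0 := by
    intro t
    induction t with
    | zero => exact le_refl _
    | succ n ih => exact le_trans (hVd n) ih
  constructor
  · apply summable_of_sum_range_le (c := V 0 / (2 - cm))
    · intro n
      have := hmpos n
      positivity
    · intro n
      have hsum : ∑ t ∈ Finset.range n, (2 - cm) * (ε t ^ 2 / m t ^ 2) ≤ V 0 - V n := by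
        calc ∑ t ∈ Finset.range n, (2 - cm) * (ε t ^ 2 / m t ^ 2)
            ≤ ∑ t ∈ Finset.range n, (V t - V (t + 1)) :=
              Finset.sum_le_sum fun t _ => by linarith [hstep t]
          _ = V 0 - V n := Finset.sum_range_sub' V n
      rw [← Finset.mul_sum] at hsum
      rw [le_div_iff₀ (by linarith : (0:ℝ) < 2 - cm)]
      have h0 := hVnn n
      have hx : (∑ t ∈ Finset.range n, ε t ^ 2 / m t ^ 2) * (2 - cm) =
          (2 - cm) * ∑ t ∈ Finset.range n, ε t ^ 2 / m t ^ 2 := mul_comm _ _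
      rw [hx]
      linarith
  · refine ⟨Real.sqrt (V 0 / (2 - cm)), fun t => ?_⟩
    have h1 : (2 - cm) * (ε t ^ 2 / m t ^ 2) ≤ V 0 := by
      have ha := hstep t
      have hb := hVle t
      have hc := hVnn (t + 1)
      linarith
    have h2 : ε t ^ 2 / m t ^ 2 ≤ V 0 / (2 - cm) := by
      rw [le_div_iff₀ (by linarith : (0:ℝ) < 2 - cm)]
      have hx : ε t ^ 2 / m t ^ 2 * (2 - cm) = (2 - cm) * (ε t ^ 2 / m t ^ 2) := mul_comm _ _
      rw [hx]
      linarith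
    have h3 : |ε t| / m t = Real.sqrt (ε t ^ 2 / m t ^ 2) := by
      rw [Real.sqrt_div (sq_nonneg _), Real.sqrt_sq_eq_abs, Real.sqrt_sq (hmpos t).le]
    rw [h3]
    exact Real.sqrt_le_sqrt h2
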